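/- The sparse projection coefficient in the lower-bound construction. Let N ~ N(0, I_p), A ⊆ {2,…,p} with |A| = s ≥ 2, ρ ∈ (0, 1/√2), and define X by X_ℓ = ρ(N₁² − 1) + √(1−2ρ²) N_ℓ for ℓ ∈ A, X_ℓ = N_ℓ otherwise; let f(X) = (Φ/√3) X₁² for Φ > 0, and let M = E[XX^T]. Then the projection coefficient θ = M^{−1} E[X f(X)] equals (2Φρ / (√3 (1 + 2(s−1)ρ²))) · 1_A, where 1_A ∈ ℝ^p is the indicator vector of A; in particular θ is s-sparse. Moreover the misspecification satisfies E[(f(X) − X^Tθ)²] = (Φ²/3)(3 − 4sρ²/(1 + 2(s−1)ρ²)) ≤ Φ². -/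

import Mathlib

open MeasureTheory ProbabilityTheory Matrix

noncomputable section

namespace SSL

/-- Euclidean inner product. -/
def dot {p : ℕ} (v w : Fin p → ℝ) : ℝ := ∑ i, v i * w i

/-- The number of nonzero entries of a vector. -/
def l0 {p : ℕ} (v : Fin p → ℝ) : ℕ := (Finset.univ.filter fun i => v i ≠ 0).card

/-- The standard Gaussian measure `N(0, I_p)` on `ℝ^p`. -/
def stdGaussianPi (p : ℕ) : Measure (Fin p → ℝ) :=
  Measure.pi fun _ => gaussianReal 0 1

/-- The perturbation map of the lower-bound construction:
`X_ℓ = ρ(N₁² − 1) + √(1−2ρ²) N_ℓ` for `ℓ ∈ A` and `X_ℓ = N_ℓ` otherwise. -/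
def perturb (p : ℕ) (hp : 0 < p) (A : Finset (Fin p)) (ρ : ℝ)
    (x : Fin p → ℝ) : Fin p → ℝ :=
  fun ℓ => if ℓ ∈ A then ρ * (x ⟨0, hp⟩ ^ 2 - 1) + Real.sqrt (1 - 2 * ρ ^ 2) * x ℓ
    else x ℓ

/-- The law of the perturbed Gaussian design. -/
def perturbedLaw (p : ℕ) (hp : 0 < p) (A : Finset (Fin p)) (ρ : ℝ) :
    Measure (Fin p → ℝ) :=
  Measure.map (perturb p hp A ρ) (stdGaussianPi p)

/-! ### Auxiliary development: Gaussian moments -/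

section Moments

open Real

/-- `∫ x^n e^{-x²/2}` over ℝ. -/
def J (n : ℕ) : ℝ := ∫ x : ℝ, x ^ n * Real.exp (-(1/2) * x ^ 2)

lemma intJ (n : ℕ) : Integrable (fun x : ℝ => x ^ n * Real.exp (-(1/2) * x ^ 2)) := by
  have h := integrable_rpow_mul_exp_neg_mul_sq (b := 1/2) (by norm_num) (s := (n : ℝ))
    (lt_of_lt_of_le (by norm_num) (Nat.cast_nonneg n))
  simpa [Real.rpow_natCast] using h

lemma intJ' (n : ℕ) (c : ℝ) (g : ℝ → ℝ)
    (hg : ∀ x, g x = c * (x ^ n * Real.exp (-(1/2) * x ^ 2))) : Integrable g := by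
  have : g = fun x => c * (x ^ n * Real.exp (-(1/2) * x ^ 2)) := funext hg
  rw [this]; exact (intJ n).const_mul c

lemma J_zero : J 0 = Real.sqrt (2 * π) := by
  have h2 : π / (1/2) = 2 * π := by ring
  have h := integral_gaussian (1/2)
  rw [h2] at h
  simp only [J, pow_zero, one_mul]
  exact h

lemma hasDerivAt_gauss (x : ℝ) : HasDerivAt (fun x : ℝ => Real.exp (-(1/2) * x ^ 2))
    (-x * Real.exp (-(1/2) * x ^ 2)) x := by
  have h1 : HasDerivAt (fun x : ℝ => -(1/2) * x ^ 2) (-x) x := by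
    have h := (hasDerivAt_pow 2 x).const_mul (-(1/2) : ℝ)
    refine h.congr_deriv ?_
    push_cast
    ring
  have := (Real.hasDerivAt_exp (-(1/2) * x ^ 2)).comp x h1
  simpa [mul_comm, Function.comp_def] using this

lemma J_one : J 1 = 0 := by
  have hu : ∀ x : ℝ, HasDerivAt (fun _ : ℝ => (1:ℝ)) ((fun _ : ℝ => (0:ℝ)) x) x :=
    fun x => hasDerivAt_const x 1
  have h := integral_mul_deriv_eq_deriv_mul_of_integrable (fun x _ => hu x) (fun x _ => hasDerivAt_gauss x)
    (intJ' 1 (-1) _ (fun x => by simp only [Pi.mul_apply]; ring))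
    (by simpa [Pi.mul_def] using (integrable_zero ℝ ℝ (volume : Measure ℝ)))
    (intJ' 0 1 _ (fun x => by simp only [Pi.mul_apply]; ring))
  simp only [zero_mul, integral_zero, neg_zero, one_mul] at h
  have h2 : ∫ x : ℝ, -x * Real.exp (-(1/2) * x ^ 2) = -J 1 := by
    rw [J, ← integral_neg]; congr 1; funext x; ring
  rw [h2] at h; linarith

lemma J_rec (n : ℕ) : J (n + 2) = (n + 1 : ℝ) * J n := by
  have hu : ∀ x : ℝ, HasDerivAt (fun x : ℝ => x ^ (n+1))
      ((fun x : ℝ => ((n:ℝ)+1) * x ^ n) x) x := by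
    intro x
    have := hasDerivAt_pow (n+1) x
    simpa using this
  have h := integral_mul_deriv_eq_deriv_mul_of_integrable (fun x _ => hu x) (fun x _ => hasDerivAt_gauss x)
    (intJ' (n+2) (-1) _ (fun x => by simp only [Pi.mul_apply]; ring))
    (intJ' n ((n:ℝ)+1) _ (fun x => by simp only [Pi.mul_apply]; ring))
    (intJ' (n+1) 1 _ (fun x => by simp only [Pi.mul_apply]; ring))
  have h2 : ∫ x : ℝ, x ^ (n+1) * (-x * Real.exp (-(1/2) * x ^ 2)) = -J (n+2) := by
    rw [J, ← integral_neg]; congr 1; funext x; ring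
  have h3 : ∫ x : ℝ, ((n:ℝ)+1) * x ^ n * Real.exp (-(1/2) * x ^ 2) = ((n:ℝ)+1) * J n := by
    rw [J, ← integral_const_mul]; congr 1; funext x; ring
  rw [h2, h3] at h; linarith

lemma J_two : J 2 = Real.sqrt (2 * π) := by
  have := J_rec 0; rw [J_zero] at this; simpa using this

lemma J_three : J 3 = 0 := by
  have := J_rec 1; rw [J_one] at this; simpa using this

lemma J_four : J 4 = 3 * Real.sqrt (2 * π) := by
  have := J_rec 2
  rw [J_two, show ((2:ℕ):ℝ) + 1 = 3 from by norm_num] at this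
  exact this

/-- moments of the standard gaussian -/
def gm (n : ℕ) : ℝ := ∫ t, t ^ n ∂(gaussianReal 0 1)

lemma integral_gaussianReal_eq (g : ℝ → ℝ) :
    ∫ t, g t ∂(gaussianReal 0 1) =
      ∫ t, gaussianPDFReal 0 1 t * g t := by
  rw [gaussianReal_of_var_ne_zero 0 one_ne_zero]
  have hd : (gaussianPDF 0 1) = fun t => ((gaussianPDFReal 0 1 t).toNNReal : ENNReal) := by
    funext t; rfl
  rw [hd, integral_withDensity_eq_integral_smul
    ((measurable_gaussianPDFReal 0 1).real_toNNReal)]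
  congr 1; funext t
  simp [NNReal.smul_def, Real.coe_toNNReal _ (gaussianPDFReal_nonneg 0 1 t)]

lemma gaussianPDFReal_std (t : ℝ) :
    gaussianPDFReal 0 1 t = (Real.sqrt (2 * π))⁻¹ * Real.exp (-(1/2) * t ^ 2) := by
  simp only [gaussianPDFReal, NNReal.coe_one, mul_one, sub_zero]
  congr 1
  ring

lemma integrable_gaussianReal_pow (n : ℕ) :
    Integrable (fun t : ℝ => t ^ n) (gaussianReal 0 1) := by
  rw [gaussianReal_of_var_ne_zero 0 one_ne_zero]
  have hd : (gaussianPDF 0 1) = fun t => ((gaussianPDFReal 0 1 t).toNNReal : ENNReal) := by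
    funext t; rfl
  rw [hd, integrable_withDensity_iff_integrable_smul
    ((measurable_gaussianPDFReal 0 1).real_toNNReal)]
  apply (intJ' n (Real.sqrt (2 * π))⁻¹ _ (fun x => ?_))
  rw [NNReal.smul_def, Real.coe_toNNReal _ (gaussianPDFReal_nonneg 0 1 x), smul_eq_mul,
    gaussianPDFReal_std]
  ring

lemma gm_eq (n : ℕ) : gm n = (Real.sqrt (2 * π))⁻¹ * J n := by
  rw [gm, integral_gaussianReal_eq, J, ← integral_const_mul]
  congr 1; funext t; rw [gaussianPDFReal_std]; ring

lemma sqrt_two_pi_ne : Real.sqrt (2 * π) ≠ 0 := by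
  positivity

lemma gm_zero : gm 0 = 1 := by rw [gm_eq, J_zero, inv_mul_cancel₀ sqrt_two_pi_ne]
lemma gm_one : gm 1 = 0 := by rw [gm_eq, J_one, mul_zero]
lemma gm_two : gm 2 = 1 := by rw [gm_eq, J_two, inv_mul_cancel₀ sqrt_two_pi_ne]
lemma gm_three : gm 3 = 0 := by rw [gm_eq, J_three, mul_zero]
lemma gm_four : gm 4 = 3 := by
  rw [gm_eq, J_four, ← mul_assoc, mul_comm _ 3, mul_assoc,
    inv_mul_cancel₀ sqrt_two_pi_ne, mul_one]

end Moments

/-! ### Product integrals over the standard Gaussian product measure -/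

abbrev μp (p : ℕ) : Measure (Fin p → ℝ) := Measure.pi fun _ => gaussianReal 0 1

lemma stdGaussianPi_eq (p : ℕ) : stdGaussianPi p = μp p := rfl

lemma integrable_pi_prod : ∀ {n : ℕ} (f : Fin n → ℝ → ℝ),
    (∀ i, Integrable (f i) (gaussianReal 0 1)) →
    Integrable (fun x : Fin n → ℝ => ∏ i, f i (x i)) (μp n) := by
  intro n
  induction n with
  | zero =>
      intro f hf
      simp only [Finset.univ_eq_empty, Finset.prod_empty]
      exact integrable_const 1
  | succ n n_ih =>
      intro f hf
      have hmp := ((measurePreserving_piFinSuccAbove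
        (fun _ : Fin (n+1) => (gaussianReal 0 1 : Measure ℝ)) 0).symm)
      rw [← hmp.integrable_comp_emb (MeasurableEquiv.measurableEmbedding _)]
      simp only [MeasurableEquiv.piFinSuccAbove_symm_apply, Fin.insertNthEquiv,
        Equiv.coe_fn_mk, Function.comp_def, Fin.prod_univ_succ, Fin.insertNth_zero,
        Fin.cons_zero, Fin.zero_succAbove, Fin.cons_succ, cast_eq]
      have h2 : Integrable (fun (x : Fin n → ℝ) ↦ ∏ j, f (Fin.succ j) (x j))
          (μp n) := n_ih (fun i => f (Fin.succ i)) (fun i ↦ hf _)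
      exact Integrable.mul_prod (hf 0) h2

lemma integral_pi_prod : ∀ {n : ℕ} (f : Fin n → ℝ → ℝ),
    ∫ x : Fin n → ℝ, ∏ i, f i (x i) ∂(μp n) = ∏ i, ∫ t, f i t ∂(gaussianReal 0 1) := by
  intro n
  induction n with
  | zero => simp
  | succ n n_ih =>
      intro f
      calc
        _ = ∫ x : ℝ × (Fin n → ℝ),
            f 0 x.1 * ∏ i : Fin n, f (Fin.succ i) (x.2 i)
              ∂((gaussianReal 0 1).prod (μp n)) := by
          rw [← ((measurePreserving_piFinSuccAbove
            (fun _ : Fin (n+1) => (gaussianReal 0 1 : Measure ℝ)) 0).symm).integral_comp']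
          simp only [MeasurableEquiv.piFinSuccAbove_symm_apply, Fin.insertNthEquiv,
            Equiv.coe_fn_mk, Fin.prod_univ_succ, Fin.insertNth_zero, Fin.cons_zero,
            Fin.zero_succAbove, Fin.cons_succ, cast_eq]
        _ = (∫ t, f 0 t ∂(gaussianReal 0 1))
              * ∏ i : Fin n, ∫ t, f (Fin.succ i) t ∂(gaussianReal 0 1) := by
          rw [← n_ih, ← integral_prod_mul]
        _ = ∏ i, ∫ t, f i t ∂(gaussianReal 0 1) := by rw [Fin.prod_univ_succ]

variable {p : ℕ}

lemma prod_single {β : Type*} [CommMonoid β] (i : Fin p) (g : Fin p → β)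
    (hg : ∀ t, t ≠ i → g t = 1) : ∏ t, g t = g i :=
  Finset.prod_eq_single_of_mem i (Finset.mem_univ i) (fun t _ ht => hg t ht)

lemma prod_double {β : Type*} [CommMonoid β] (i j : Fin p) (hij : i ≠ j) (g : Fin p → β)
    (hg : ∀ t, t ≠ i → t ≠ j → g t = 1) : ∏ t, g t = g i * g j := by
  rw [← Finset.prod_subset (Finset.subset_univ {i, j})
    (fun t _ ht => hg t (fun h => ht (by simp [h])) (fun h => ht (by simp [h])))]
  exact Finset.prod_pair hij

lemma integrable_monoK (k : Fin p → ℕ) :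
    Integrable (fun x : Fin p → ℝ => ∏ t, x t ^ k t) (μp p) :=
  integrable_pi_prod _ (fun t => integrable_gaussianReal_pow (k t))

lemma integral_monoK (k : Fin p → ℕ) :
    ∫ x, ∏ t, x t ^ k t ∂(μp p) = ∏ t, gm (k t) :=
  integral_pi_prod _

lemma mono1_eq (i : Fin p) (a : ℕ) (x : Fin p → ℝ) :
    x i ^ a = ∏ t, x t ^ (if t = i then a else 0) := by
  rw [prod_single i _ (fun t ht => by simp only [if_neg ht, pow_zero])]
  simp

lemma integrable_mono1 (i : Fin p) (a : ℕ) :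
    Integrable (fun x : Fin p → ℝ => x i ^ a) (μp p) := by
  have h := integrable_monoK (p := p) (fun t => if t = i then a else 0)
  exact h.congr (Filter.Eventually.of_forall fun x => (mono1_eq i a x).symm)

lemma integral_mono1 (i : Fin p) (a : ℕ) : ∫ x, x i ^ a ∂(μp p) = gm a := by
  rw [show (fun x : Fin p → ℝ => x i ^ a) = fun x => ∏ t, x t ^ (if t = i then a else 0)
    from funext fun x => mono1_eq i a x, integral_monoK,
    prod_single i _ (fun t ht => by simp only [if_neg ht, gm_zero])]
  simp

lemma mono2_eq {i j : Fin p} (hij : i ≠ j) (a b : ℕ) (x : Fin p → ℝ) :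
    x i ^ a * x j ^ b = ∏ t, x t ^ (if t = i then a else if t = j then b else 0) := by
  rw [prod_double i j hij _ (fun t hti htj => by simp only [if_neg hti, if_neg htj, pow_zero])]
  simp [hij, hij.symm]

lemma integrable_mono2 (i j : Fin p) (a b : ℕ) :
    Integrable (fun x : Fin p → ℝ => x i ^ a * x j ^ b) (μp p) := by
  by_cases hij : i = j
  · subst hij
    have h := integrable_mono1 i (a + b)
    exact h.congr (Filter.Eventually.of_forall fun x => by simp [pow_add])
  · have h := integrable_monoK (p := p) (fun t => if t = i then a else if t = j then b else 0)
    exact h.congr (Filter.Eventually.of_forall fun x => (mono2_eq hij a b x).symm)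

lemma integral_mono2 {i j : Fin p} (hij : i ≠ j) (a b : ℕ) :
    ∫ x, x i ^ a * x j ^ b ∂(μp p) = gm a * gm b := by
  rw [show (fun x : Fin p → ℝ => x i ^ a * x j ^ b)
      = fun x => ∏ t, x t ^ (if t = i then a else if t = j then b else 0)
    from funext fun x => mono2_eq hij a b x, integral_monoK,
    prod_double i j hij _
      (fun t hti htj => by simp only [if_neg hti, if_neg htj, gm_zero])]
  simp [hij, hij.symm]

lemma integral_mono2' (i j : Fin p) (a b : ℕ) :
    ∫ x, x i ^ a * x j ^ b ∂(μp p) = if i = j then gm (a + b) else gm a * gm b := by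
  by_cases h : i = j
  · subst h
    rw [if_pos rfl,
      show (fun x : Fin p → ℝ => x i ^ a * x i ^ b) = fun x => x i ^ (a + b)
        from funext fun x => (pow_add _ _ _).symm]
    exact integral_mono1 i (a + b)
  · rw [if_neg h]; exact integral_mono2 h a b

lemma integrable_poly {n : ℕ} (C : Fin n → ℝ) (I J : Fin n → Fin p) (a b : Fin n → ℕ) :
    Integrable (fun x : Fin p → ℝ => ∑ t, C t * (x (I t) ^ a t * x (J t) ^ b t)) (μp p) :=
  integrable_finset_sum _ (fun t _ => (integrable_mono2 (I t) (J t) (a t) (b t)).const_mul (C t))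

lemma integral_poly {n : ℕ} (C : Fin n → ℝ) (I J : Fin n → Fin p) (a b : Fin n → ℕ) :
    ∫ x, ∑ t, C t * (x (I t) ^ a t * x (J t) ^ b t) ∂(μp p)
      = ∑ t, C t * (if I t = J t then gm (a t + b t) else gm (a t) * gm (b t)) := by
  rw [integral_finset_sum _
    (fun t _ => (integrable_mono2 (I t) (J t) (a t) (b t)).const_mul (C t))]
  exact Finset.sum_congr rfl fun t _ => by rw [integral_const_mul, integral_mono2']

@[simp] lemma cons_val_five {α : Type*} {m : ℕ} (x : α)
    (u : Fin (m + 5) → α) : Matrix.vecCons x u 5 = u 4 := rfl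
@[simp] lemma cons_val_six {α : Type*} {m : ℕ} (x : α)
    (u : Fin (m + 6) → α) : Matrix.vecCons x u 6 = u 5 := rfl
@[simp] lemma cons_val_seven {α : Type*} {m : ℕ} (x : α)
    (u : Fin (m + 7) → α) : Matrix.vecCons x u 7 = u 6 := rfl

set_option maxHeartbeats 2000000 in
/-- **The sparse projection coefficient in the lower-bound construction of Theorem 1.** -/
theorem lower_bound_projection_coefficient
    (p s : ℕ) (hp : 0 < p) (hs : 2 ≤ s)
    (A : Finset (Fin p)) (hA0 : (⟨0, hp⟩ : Fin p) ∉ A) (hcard : A.card = s)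
    (ρ : ℝ) (hρ0 : 0 < ρ) (hρ : ρ ^ 2 < 1 / 2)
    (Φ : ℝ) (hΦ : 0 < Φ)
    -- `f(X) = (Φ/√3) X₁²`
    (f : (Fin p → ℝ) → ℝ) (hf : ∀ x, f x = Φ / Real.sqrt 3 * x ⟨0, hp⟩ ^ 2)
    (M : Matrix (Fin p) (Fin p) ℝ)
    (hM : M = Matrix.of fun ℓ m => ∫ x, x ℓ * x m ∂(perturbedLaw p hp A ρ))
    (θ : Fin p → ℝ)
    (hθ : θ = fun ℓ => if ℓ ∈ A then
      2 * Φ * ρ / (Real.sqrt 3 * (1 + 2 * ((s : ℝ) - 1) * ρ ^ 2)) else 0) :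
    -- the projection coefficient `M⁻¹E[Xf(X)]` equals
    -- `(2Φρ/(√3(1+2(s−1)ρ²))) 1_A`, which is `s`-sparse
    M⁻¹.mulVec (fun ℓ => ∫ x, x ℓ * f x ∂(perturbedLaw p hp A ρ)) = θ ∧
    l0 θ = s ∧
    -- the misspecification: `E(f(X) − Xᵀθ)² = (Φ²/3)(3 − 4sρ²/(1+2(s−1)ρ²)) ≤ Φ²`
    (∫ x, (f x - dot x θ) ^ 2 ∂(perturbedLaw p hp A ρ) =
      Φ ^ 2 / 3 * (3 - 4 * (s : ℝ) * ρ ^ 2 / (1 + 2 * ((s : ℝ) - 1) * ρ ^ 2))) ∧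
    (∫ x, (f x - dot x θ) ^ 2 ∂(perturbedLaw p hp A ρ) ≤ Φ ^ 2) := by
  -- notation
  set i0 : Fin p := ⟨0, hp⟩ with hi0
  have h2ρ : 0 < 1 - 2 * ρ ^ 2 := by linarith
  have hq2 : Real.sqrt (1 - 2 * ρ ^ 2) ^ 2 = 1 - 2 * ρ ^ 2 := Real.sq_sqrt h2ρ.le
  set q : ℝ := Real.sqrt (1 - 2 * ρ ^ 2) with hqdef
  have hsR : (2:ℝ) ≤ (s:ℝ) := by exact_mod_cast hs
  set D : ℝ := 1 + 2 * ((s:ℝ) - 1) * ρ ^ 2 with hDdef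
  have hD : 0 < D := by nlinarith [sq_nonneg ρ]
  have hD' : D ≠ 0 := ne_of_gt hD
  have h3 : (0:ℝ) < Real.sqrt 3 := Real.sqrt_pos.mpr (by norm_num)
  have h3' : Real.sqrt 3 ≠ 0 := ne_of_gt h3
  set c : ℝ := 2 * Φ * ρ / (Real.sqrt 3 * D) with hcdef
  have hc : 0 < c := div_pos (by positivity) (by positivity)
  set k : ℝ := Φ / Real.sqrt 3 with hkdef
  have hk2 : k ^ 2 = Φ ^ 2 / 3 := by
    rw [hkdef, div_pow, Real.sq_sqrt (by norm_num : (0:ℝ) ≤ 3)]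
  have hc2 : c = 2 * k * ρ / D := by rw [hcdef, hkdef]; field_simp
  -- the indicator vector
  set e : Fin p → ℝ := fun i => if i ∈ A then 1 else 0 with hedef
  have he : ∀ i, e i * e i = e i := fun i => by
    by_cases h : i ∈ A <;> simp [hedef, h]
  have hesum : ∑ i, e i * e i = (s:ℝ) := by
    rw [Finset.sum_congr rfl (fun i _ => he i), hedef]
    simp only [Finset.sum_ite_mem, Finset.univ_inter, Finset.sum_const, nsmul_eq_mul, mul_one]
    exact_mod_cast congrArg Nat.cast hcard
  -- measurability of the perturbation
  have hpm : Measurable (perturb p hp A ρ) := by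
    apply measurable_pi_lambda
    intro ℓ
    by_cases h : ℓ ∈ A
    · simp only [perturb, if_pos h]
      fun_prop
    · simp only [perturb, if_neg h]
      exact measurable_pi_apply ℓ
  have hmap : ∀ (g : (Fin p → ℝ) → ℝ), Measurable g →
      ∫ x, g x ∂(perturbedLaw p hp A ρ) = ∫ x, g (perturb p hp A ρ x) ∂(μp p) := by
    intro g hg
    rw [perturbedLaw, integral_map hpm.aemeasurable hg.aestronglyMeasurable, stdGaussianPi_eq]
  -- the entries of M
  have hmeas_mul : ∀ ℓ m : Fin p, Measurable (fun x : Fin p → ℝ => x ℓ * x m) :=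
    fun ℓ m => (measurable_pi_apply ℓ).mul (measurable_pi_apply m)
  have hEnt : ∀ ℓ m : Fin p, (∫ x, x ℓ * x m ∂(perturbedLaw p hp A ρ))
      = (if ℓ = m then 1 else if ℓ ∈ A ∧ m ∈ A then 2 * ρ ^ 2 else 0) := by
    intro ℓ m
    rw [hmap _ (hmeas_mul ℓ m)]
    by_cases hℓ : ℓ ∈ A <;> by_cases hm : m ∈ A
    · -- both in A
      have h0ℓ : i0 ≠ ℓ := fun h => hA0 (by rw [h]; exact hℓ)
      have h0m : i0 ≠ m := fun h => hA0 (by rw [h]; exact hm)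
      rw [show (fun x : Fin p → ℝ => perturb p hp A ρ x ℓ * perturb p hp A ρ x m)
          = fun x => ∑ t : Fin 8,
            (![ρ^2, -(2*ρ^2), ρ^2, ρ*q, -(ρ*q), ρ*q, -(ρ*q), q^2] t) *
            (x (![i0,i0,i0,i0,m,i0,ℓ,ℓ] t) ^ (![2,2,0,2,1,2,1,1] t) *
             x (![i0,i0,i0,m,m,ℓ,ℓ,m] t) ^ (![2,0,0,1,0,1,0,1] t))
        from funext fun x => by
          simp only [perturb, if_pos hℓ, if_pos hm, ← hqdef, ← hi0, Fin.sum_univ_eight]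
          simp
          ring, integral_poly]
      by_cases hlm : ℓ = m
      · subst hlm
        simp [Fin.sum_univ_eight, if_neg h0ℓ, gm_zero, gm_one, gm_two, gm_four]
        linear_combination hq2
      · simp [Fin.sum_univ_eight, if_neg h0ℓ, if_neg h0m, if_neg hlm, hℓ, hm,
          gm_zero, gm_one, gm_two, gm_four]
        ring
    · -- ℓ ∈ A, m ∉ A
      have hml : ℓ ≠ m := fun h => hm (h ▸ hℓ)
      rw [show (fun x : Fin p → ℝ => perturb p hp A ρ x ℓ * perturb p hp A ρ x m)
          = fun x => ∑ t : Fin 3,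
            (![ρ, -ρ, q] t) *
            (x (![i0, m, ℓ] t) ^ (![2,1,1] t) * x (![m, m, m] t) ^ (![1,0,1] t))
        from funext fun x => by
          simp only [perturb, if_pos hℓ, if_neg hm, ← hqdef, ← hi0, Fin.sum_univ_three]
          simp
          ring, integral_poly]
      by_cases h0m : i0 = m
      · simp [Fin.sum_univ_three, if_pos h0m, if_neg hml, hℓ, hm,
          gm_one, gm_two, gm_three]
      · simp [Fin.sum_univ_three, if_neg h0m, if_neg hml, hℓ, hm,
          gm_one, gm_two, gm_three]
    · -- ℓ ∉ A, m ∈ A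
      have hml : ℓ ≠ m := fun h => hℓ (h ▸ hm)
      rw [show (fun x : Fin p → ℝ => perturb p hp A ρ x ℓ * perturb p hp A ρ x m)
          = fun x => ∑ t : Fin 3,
            (![ρ, -ρ, q] t) *
            (x (![i0, ℓ, ℓ] t) ^ (![2,1,1] t) * x (![ℓ, ℓ, m] t) ^ (![1,0,1] t))
        from funext fun x => by
          simp only [perturb, if_pos hm, if_neg hℓ, ← hqdef, ← hi0, Fin.sum_univ_three]
          simp
          ring, integral_poly]
      by_cases h0ℓ : i0 = ℓ
      · simp [Fin.sum_univ_three, if_pos h0ℓ, if_neg hml, hℓ, hm,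
          gm_one, gm_two, gm_three]
      · simp [Fin.sum_univ_three, if_neg h0ℓ, if_neg hml, hℓ, hm,
          gm_one, gm_two, gm_three]
    · -- neither
      rw [show (fun x : Fin p → ℝ => perturb p hp A ρ x ℓ * perturb p hp A ρ x m)
          = fun x => x ℓ ^ 1 * x m ^ 1
        from funext fun x => by simp only [perturb, if_neg hℓ, if_neg hm]; ring,
        integral_mono2']
      by_cases hlm : ℓ = m
      · simp [if_pos hlm, gm_two]
      · simp [if_neg hlm, hℓ, hm, gm_one]
  -- M in structured form
  set P : Matrix (Fin p) (Fin p) ℝ := vecMulVec e e with hPdef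
  set Dg : Matrix (Fin p) (Fin p) ℝ := Matrix.diagonal e with hDgdef
  have hMval : M = 1 + (2 * ρ ^ 2) • (P - Dg) := by
    rw [hM]
    ext ℓ m
    rw [Matrix.of_apply, hEnt ℓ m]
    simp only [Matrix.add_apply, Matrix.one_apply, Matrix.smul_apply, Matrix.sub_apply,
      hPdef, vecMulVec_apply, hDgdef, Matrix.diagonal_apply, smul_eq_mul, hedef]
    by_cases h1 : ℓ = m
    · subst h1
      by_cases h2 : ℓ ∈ A <;> simp [h2]
    · by_cases h2 : ℓ ∈ A <;> by_cases h3 : m ∈ A <;> simp [h1, h2, h3]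
  have hDgDg : Dg * Dg = Dg := by
    rw [hDgdef, Matrix.diagonal_mul_diagonal, show (fun i => e i * e i) = e from funext he]
  have hDgP : Dg * P = P := by
    ext i j
    simp only [hDgdef, hPdef, Matrix.diagonal_mul, vecMulVec_apply]
    rw [← mul_assoc, he]
  have hPDg : P * Dg = P := by
    ext i j
    simp only [hDgdef, hPdef, Matrix.mul_diagonal, vecMulVec_apply]
    rw [mul_assoc, he]
  have hPP : P * P = (s:ℝ) • P := by
    ext i j
    rw [Matrix.mul_apply]
    simp only [hPdef, vecMulVec_apply, Matrix.smul_apply, smul_eq_mul]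
    calc ∑ m, e i * e m * (e m * e j)
        = (e i * e j) * ∑ m, e m * e m := by
          rw [Finset.mul_sum]; exact Finset.sum_congr rfl fun m _ => by ring
      _ = (s:ℝ) * (e i * e j) := by rw [hesum]; ring
  set W : Matrix (Fin p) (Fin p) ℝ :=
    1 + ((1 - 2*ρ^2)⁻¹ - 1) • Dg + (-(2*ρ^2) / ((1 - 2*ρ^2) * D)) • P with hWdef
  have hWM : W * M = 1 := by
    rw [hWdef, hMval]
    simp only [add_mul, mul_add, Matrix.smul_mul, Matrix.mul_smul, Matrix.one_mul,
      Matrix.mul_one, Matrix.mul_sub, hDgDg, hDgP, hPDg, hPP, smul_smul, smul_sub]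
    have h2ρ' : 1 - 2 * ρ ^ 2 ≠ 0 := h2ρ.ne'
    match_scalars <;> field_simp <;> ring
  have hInvM : Invertible M := invertibleOfLeftInverse M W hWM
  have hMinvM : M⁻¹ * M = 1 := Matrix.nonsing_inv_mul M (Matrix.isUnit_det_of_invertible M)
  -- the vector E[X f(X)]
  have hbv : ∀ ℓ, (∫ x, x ℓ * f x ∂(perturbedLaw p hp A ρ)) = (2*k*ρ) * e ℓ := by
    intro ℓ
    have hgm' : Measurable fun x : Fin p → ℝ => x ℓ * f x := by
      rw [show (fun x : Fin p → ℝ => x ℓ * f x) = fun x => x ℓ * (k * x i0 ^ 2)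
        from funext fun x => by rw [hf]]
      fun_prop
    rw [hmap _ hgm']
    by_cases hℓ : ℓ ∈ A
    · have h0ℓ : i0 ≠ ℓ := fun h => hA0 (by rw [h]; exact hℓ)
      rw [show (fun x : Fin p → ℝ => perturb p hp A ρ x ℓ * f (perturb p hp A ρ x))
          = fun x => ∑ t : Fin 3,
            (![k*ρ, -(k*ρ), k*q] t) *
            (x (![i0, i0, ℓ] t) ^ (![2,0,1] t) * x (![i0, i0, i0] t) ^ (![2,2,2] t))
        from funext fun x => by
          rw [hf]
          simp only [perturb, if_pos hℓ, if_neg hA0, ← hqdef, ← hi0, Fin.sum_univ_three]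
          simp
          ring, integral_poly]
      simp [Fin.sum_univ_three, if_neg h0ℓ, if_neg (Ne.symm h0ℓ), gm_zero, gm_one,
        gm_two, gm_three, gm_four, hedef, hℓ]
      ring
    · rw [show (fun x : Fin p → ℝ => perturb p hp A ρ x ℓ * f (perturb p hp A ρ x))
          = fun x => k * (x ℓ ^ 1 * x i0 ^ 2)
        from funext fun x => by
          rw [hf]
          simp only [perturb, if_neg hℓ, if_neg hA0, ← hi0]
          ring, integral_const_mul, integral_mono2']
      rw [show e ℓ = 0 from by simp [hedef, hℓ]]
      by_cases h0ℓ : ℓ = i0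
      · simp [if_pos h0ℓ, gm_three]
      · simp [if_neg h0ℓ, gm_one]
  have hθe : θ = c • e := by
    funext ℓ
    rw [hθ]
    by_cases h : ℓ ∈ A <;> simp [hedef, h]
  -- M θ = E[X f(X)]
  have hPe : P.mulVec (c • e) = (c * s) • e := by
    funext i
    simp only [Matrix.mulVec, dotProduct, hPdef, vecMulVec_apply, Pi.smul_apply,
      smul_eq_mul]
    calc ∑ m, e i * e m * (c * e m)
        = (c * e i) * ∑ m, e m * e m := by
          rw [Finset.mul_sum]; exact Finset.sum_congr rfl fun m _ => by ring
      _ = c * (s:ℝ) * e i := by rw [hesum]; ring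
  have hDge : Dg.mulVec (c • e) = c • e := by
    funext i
    rw [hDgdef, Matrix.mulVec_diagonal]
    simp only [Pi.smul_apply, smul_eq_mul]
    calc e i * (c * e i) = c * (e i * e i) := by ring
      _ = c * e i := by rw [he]
  have hck : c * D = 2 * k * ρ := by rw [hc2]; field_simp
  have hMθ : M.mulVec θ = fun ℓ => (2*k*ρ) * e ℓ := by
    rw [hMval, hθe]
    funext ℓ
    rw [Matrix.add_mulVec, Matrix.one_mulVec, Matrix.smul_mulVec, Matrix.sub_mulVec,
      hPe, hDge]
    simp only [Pi.add_apply, Pi.smul_apply, Pi.sub_apply, smul_eq_mul]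
    have hck' : c * (1 + 2 * ((s:ℝ) - 1) * ρ ^ 2) = 2 * k * ρ := by rw [← hDdef]; exact hck
    linear_combination e ℓ * hck'
  -- misspecification computation
  have hgmeas : Measurable (fun x : Fin p → ℝ => (f x - dot x θ) ^ 2) := by
    rw [show (fun x : Fin p → ℝ => (f x - dot x θ) ^ 2)
        = fun x => (k * x i0 ^ 2 - ∑ i, x i * θ i) ^ 2
      from funext fun x => by rw [hf, dot]]
    fun_prop
  set S : (Fin p → ℝ) → ℝ := fun x => ∑ i ∈ A, x i with hSdef
  have hdot : ∀ x : Fin p → ℝ,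
      dot (perturb p hp A ρ x) θ = c * ρ * s * (x i0 ^ 2 - 1) + c * q * S x := by
    intro x
    rw [dot, hθ]
    rw [← Finset.sum_subset (Finset.subset_univ A) (fun i _ hi => by simp [hi])]
    rw [Finset.sum_congr rfl (fun i (hi : i ∈ A) =>
      show perturb p hp A ρ x i * (if i ∈ A then c else 0)
          = c * ρ * (x i0 ^ 2 - 1) + c * q * x i from by
        simp only [perturb, if_pos hi, ← hqdef, ← hi0]
        ring)]
    rw [Finset.sum_add_distrib, Finset.sum_const, hcard, ← Finset.mul_sum]
    simp only [hSdef, nsmul_eq_mul]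
    ring
  have hintegrand : ∀ x : Fin p → ℝ,
      (f (perturb p hp A ρ x) - dot (perturb p hp A ρ x) θ) ^ 2
      = (k - c*ρ*s)^2 * (x i0 ^ 2 * x i0 ^ 2)
        + (2*(k - c*ρ*s)*(c*ρ*s)) * x i0 ^ 2
        + (c*ρ*s)^2
        + (-(2*(c*q)*(k - c*ρ*s))) * (x i0 ^ 2 * S x)
        + (-(2*(c*q)*(c*ρ*s))) * S x
        + (c*q)^2 * (S x * S x) := by
    intro x
    rw [hf, hdot x, show perturb p hp A ρ x i0 = x i0 from by
      simp only [perturb, if_neg hA0]]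
    ring
  have hco : ∀ i : Fin p, Integrable (fun x : Fin p → ℝ => x i) (μp p) :=
    fun i => (integrable_mono1 i 1).congr (Filter.Eventually.of_forall fun x => pow_one _)
  have hIS : Integrable S (μp p) := by
    rw [hSdef]
    exact integrable_finset_sum _ (fun i _ => hco i)
  have hSS : (fun x : Fin p → ℝ => S x * S x) = fun x => ∑ i ∈ A, ∑ j ∈ A, x i * x j :=
    funext fun x => by simp only [hSdef]; exact Finset.sum_mul_sum A A _ _
  have hIS2' : ∀ i j : Fin p, Integrable (fun x : Fin p → ℝ => x i * x j) (μp p) :=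
    fun i j => (integrable_mono2 i j 1 1).congr (Filter.Eventually.of_forall fun x => by simp)
  have hIS2 : Integrable (fun x => S x * S x) (μp p) := by
    rw [hSS]
    exact integrable_finset_sum _ (fun i _ => integrable_finset_sum _ (fun j _ => hIS2' i j))
  have hx2S : (fun x : Fin p → ℝ => x i0 ^ 2 * S x) = fun x => ∑ j ∈ A, x i0 ^ 2 * x j ^ 1 :=
    funext fun x => by simp only [hSdef]; rw [Finset.mul_sum]; simp
  have hIx2S : Integrable (fun x => x i0 ^ 2 * S x) (μp p) := by
    rw [hx2S]
    exact integrable_finset_sum _ (fun j _ => integrable_mono2 i0 j 2 1)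
  have hES : ∫ x, S x ∂(μp p) = 0 := by
    simp only [hSdef]
    rw [integral_finset_sum _ (fun i _ => hco i)]
    refine Finset.sum_eq_zero fun i _ => ?_
    rw [show (fun x : Fin p → ℝ => x i) = fun x => x i ^ 1
        from funext fun x => (pow_one _).symm,
      integral_mono1, gm_one]
  have hmon11 : ∀ i j : Fin p, ∫ x, x i * x j ∂(μp p) = if i = j then 1 else 0 := by
    intro i j
    rw [show (fun x : Fin p → ℝ => x i * x j) = fun x => x i ^ 1 * x j ^ 1
      from funext fun x => by ring, integral_mono2']
    split_ifs <;> simp [gm_two, gm_one]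
  have hES2 : ∫ x, S x * S x ∂(μp p) = (s:ℝ) := by
    rw [hSS]
    rw [integral_finset_sum _
      (fun i _ => integrable_finset_sum _ (fun j _ => hIS2' i j))]
    have hrow : ∀ i ∈ A, (∫ x, ∑ j ∈ A, x i * x j ∂(μp p)) = 1 := by
      intro i hi
      rw [integral_finset_sum _ (fun j _ => hIS2' i j),
        Finset.sum_congr rfl (fun j _ => hmon11 i j),
        Finset.sum_ite_eq A i (fun _ => (1:ℝ)), if_pos hi]
    rw [Finset.sum_congr rfl hrow, Finset.sum_const, hcard, nsmul_eq_mul, mul_one]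
  have hEx2S : ∫ x, x i0 ^ 2 * S x ∂(μp p) = 0 := by
    rw [hx2S, integral_finset_sum _ (fun j _ => integrable_mono2 i0 j 2 1)]
    refine Finset.sum_eq_zero fun j hj => ?_
    rw [integral_mono2', if_neg (fun h => hA0 (by rw [h]; exact hj))]
    simp [gm_one]
  have hmain : ∫ x, (f x - dot x θ) ^ 2 ∂(perturbedLaw p hp A ρ)
      = Φ ^ 2 / 3 * (3 - 4 * (s:ℝ) * ρ ^ 2 / D) := by
    rw [hmap _ hgmeas]
    rw [show (fun x : Fin p → ℝ =>
        (f (perturb p hp A ρ x) - dot (perturb p hp A ρ x) θ) ^ 2)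
      = fun x => (k - c*ρ*s)^2 * (x i0 ^ 2 * x i0 ^ 2)
        + (2*(k - c*ρ*s)*(c*ρ*s)) * x i0 ^ 2
        + (c*ρ*s)^2
        + (-(2*(c*q)*(k - c*ρ*s))) * (x i0 ^ 2 * S x)
        + (-(2*(c*q)*(c*ρ*s))) * S x
        + (c*q)^2 * (S x * S x)
      from funext hintegrand]
    have I1 := (integrable_mono2 i0 i0 2 2).const_mul ((k - c*ρ*s)^2)
    have I2 := (integrable_mono1 i0 2).const_mul (2*(k - c*ρ*s)*(c*ρ*s))
    have I3 : Integrable (fun _ : Fin p → ℝ => (c*ρ*s)^2) (μp p) := integrable_const _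
    have I4 := hIx2S.const_mul (-(2*(c*q)*(k - c*ρ*s)))
    have I5 := hIS.const_mul (-(2*(c*q)*(c*ρ*s)))
    have I6 := hIS2.const_mul ((c*q)^2)
    set F : Fin 6 → (Fin p → ℝ) → ℝ :=
      ![fun x => (k - c*ρ*s)^2 * (x i0 ^ 2 * x i0 ^ 2),
        fun x => (2*(k - c*ρ*s)*(c*ρ*s)) * x i0 ^ 2,
        fun _ => (c*ρ*s)^2,
        fun x => (-(2*(c*q)*(k - c*ρ*s))) * (x i0 ^ 2 * S x),
        fun x => (-(2*(c*q)*(c*ρ*s))) * S x,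
        fun x => (c*q)^2 * (S x * S x)] with hF
    have hFint : ∀ t, Integrable (F t) (μp p) := by
      intro t
      fin_cases t
      · simpa [hF] using I1
      · simpa [hF] using I2
      · simpa [hF] using I3
      · simpa [hF] using I4
      · simpa [hF] using I5
      · simpa [hF] using I6
    rw [show (fun x : Fin p → ℝ => (k - c*ρ*s)^2 * (x i0 ^ 2 * x i0 ^ 2)
        + (2*(k - c*ρ*s)*(c*ρ*s)) * x i0 ^ 2
        + (c*ρ*s)^2
        + (-(2*(c*q)*(k - c*ρ*s))) * (x i0 ^ 2 * S x)
        + (-(2*(c*q)*(c*ρ*s))) * S x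
        + (c*q)^2 * (S x * S x)) = fun x => ∑ t : Fin 6, F t x
      from funext fun x => by simp [hF, Fin.sum_univ_six],
      integral_finset_sum _ (fun t _ => hFint t)]
    simp only [hF, Fin.sum_univ_six, Matrix.cons_val]
    norm_num
    rw [integral_neg, integral_neg, integral_const_mul, integral_const_mul, integral_const_mul,
      integral_const_mul, integral_const_mul, hES, hES2, hEx2S,
      show ∫ x, x i0 ^ 2 * x i0 ^ 2 ∂(μp p) = 3 from by
        rw [integral_mono2']; simp [gm_four],
      show ∫ x, x i0 ^ 2 ∂(μp p) = 1 from by rw [integral_mono1, gm_two]]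
    have hq2' : (c*q)^2 = c^2 * (1 - 2*ρ^2) := by rw [mul_pow, hq2]
    have hphi : Φ ^ 2 = 3 * k ^ 2 := by rw [hk2]; ring
    have hD'' : 1 + 2 * ((s:ℝ) - 1) * ρ ^ 2 ≠ 0 := by rw [← hDdef]; exact hD'
    rw [hq2', hc2, hphi]
    field_simp
    ring
  refine ⟨?_, ?_, ?_, ?_⟩
  · -- projection coefficient
    rw [show (fun ℓ => ∫ x, x ℓ * f x ∂(perturbedLaw p hp A ρ)) = M.mulVec θ
      from funext fun ℓ => by rw [hbv ℓ, hMθ]]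
    rw [Matrix.mulVec_mulVec, hMinvM, Matrix.one_mulVec]
  · -- sparsity
    have hfilter : (Finset.univ.filter fun i => θ i ≠ 0) = A := by
      ext i
      simp only [Finset.mem_filter, Finset.mem_univ, true_and, hθ]
      by_cases h : i ∈ A <;> simp [h, ne_of_gt hc]
    rw [l0, hfilter, hcard]
  · exact hmain
  · rw [hmain]
    have h4 : 0 ≤ 4 * (s:ℝ) * ρ ^ 2 / D := by positivity
    nlinarith [sq_nonneg Φ]


end SSL
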